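/- Assume the alternating-minimization framework. Let (f̂, ĝ) be a joint minimizer and let (f_m, g_m), m ≥ 1, be alternating-minimization iterates. Then for every m ≥ 1, ‖f̂ − f_m‖² ≤ −⟨f̂ − f_m, ĝ − g_m⟩, and symmetrically ‖ĝ − g_{m+1}‖² ≤ −⟨ĝ − g_{m+1}, f̂ − f_m⟩. (Key variational inequality in the proof of the paper's Theorem 1, obtained by combining the first-order optimality of the coordinate update with that of the joint minimizer, using only convexity of the penalties.) -/
import Mathlib


open RealInnerProductSpace Filter

/-- First-order optimality condition: if `x` minimizes `‖u - (· - x)‖² + L ·`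
over a convex set `C` with `L` convex on `C`, then `2⟪u, z - x⟫ ≤ L z - L x`
for all `z ∈ C`. -/
lemma altMin_first_order {H : Type*} [NormedAddCommGroup H] [InnerProductSpace ℝ H]
    (C : Set H) (hC : Convex ℝ C) (L : H → ℝ) (hL : ConvexOn ℝ C L)
    (u x z : H) (hx : x ∈ C) (hz : z ∈ C)
    (hminx : ∀ x' ∈ C, ‖u‖ ^ 2 + L x ≤ ‖u - (x' - x)‖ ^ 2 + L x') :
    2 * ⟪u, z - x⟫ ≤ L z - L x := by
  set v := z - x with hv
  have key : ∀ t : ℝ, 0 < t → t ≤ 1 → 2 * ⟪u, v⟫ ≤ t * ‖v‖ ^ 2 + (L z - L x) := by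
    intro t ht ht1
    have hmem : x + t • v ∈ C := by
      have h := hC hx hz (by linarith : (0:ℝ) ≤ 1 - t) ht.le (by ring)
      have he : (1 - t) • x + t • z = x + t • v := by
        simp [hv, smul_sub, sub_smul]; abel
      rwa [he] at h
    have hLle : L (x + t • v) ≤ (1 - t) * L x + t * L z := by
      have h := hL.2 hx hz (by linarith : (0:ℝ) ≤ 1 - t) ht.le (by ring)
      have he : (1 - t) • x + t • z = x + t • v := by
        simp [hv, smul_sub, sub_smul]; abel
      rwa [he] at h
    have hm := hminx (x + t • v) hmem
    have hsimp : x + t • v - x = t • v := by abel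
    rw [hsimp] at hm
    have hexp : ‖u - t • v‖ ^ 2 = ‖u‖ ^ 2 - 2 * t * ⟪u, v⟫ + t ^ 2 * ‖v‖ ^ 2 := by
      rw [norm_sub_sq_real, real_inner_smul_right, norm_smul, mul_pow, Real.norm_eq_abs, sq_abs]
      ring
    rw [hexp] at hm
    have h2 : 2 * t * ⟪u, v⟫ ≤ t ^ 2 * ‖v‖ ^ 2 + t * (L z - L x) := by nlinarith
    have h3 : t * (2 * ⟪u, v⟫) ≤ t * (t * ‖v‖ ^ 2 + (L z - L x)) := by nlinarith
    exact le_of_mul_le_mul_left h3 ht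
  refine le_of_forall_pos_le_add fun ε hε => ?_
  set t := min 1 (ε / (‖v‖ ^ 2 + 1)) with htdef
  have hpos : 0 < t := lt_min one_pos (div_pos hε (by positivity))
  have h1 : t ≤ 1 := min_le_left _ _
  have hk := key t hpos h1
  have hte : t * ‖v‖ ^ 2 ≤ ε := by
    have h2 : t ≤ ε / (‖v‖ ^ 2 + 1) := min_le_right _ _
    have h3 : t * ‖v‖ ^ 2 ≤ (ε / (‖v‖ ^ 2 + 1)) * ‖v‖ ^ 2 :=
      mul_le_mul_of_nonneg_right h2 (by positivity)
    have h4 : (ε / (‖v‖ ^ 2 + 1)) * ‖v‖ ^ 2 ≤ ε := by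
      rw [div_mul_eq_mul_div, div_le_iff₀ (by positivity)]
      nlinarith [sq_nonneg ‖v‖]
    linarith
  linarith

/-- Key variational inequality in the proof of the paper's Theorem 1:
`‖f̂ - f_m‖² ≤ -⟪f̂ - f_m, ĝ - g_m⟫` and symmetrically for `g_{m+1}`. -/
theorem altMin_variational_inequality
    {H : Type*} [NormedAddCommGroup H] [InnerProductSpace ℝ H]
    (F G : Set H) (hF : Convex ℝ F) (hG : Convex ℝ G)
    (y : H) (Lf Lg : H → ℝ)
    (hLf : ConvexOn ℝ F Lf) (hLg : ConvexOn ℝ G Lg)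
    (fhat ghat : H) (hfhatF : fhat ∈ F) (hghatG : ghat ∈ G)
    (hmin : ∀ f ∈ F, ∀ g ∈ G,
      ‖y - fhat - ghat‖ ^ 2 + Lf fhat + Lg ghat ≤ ‖y - f - g‖ ^ 2 + Lf f + Lg g)
    (f g : ℕ → H) (hf0 : f 0 ∈ F)
    (hfF : ∀ m, 1 ≤ m → f m ∈ F) (hgG : ∀ m, 1 ≤ m → g m ∈ G)
    (hgstep : ∀ m, 1 ≤ m → ∀ g' ∈ G,
      ‖y - f (m - 1) - g m‖ ^ 2 + Lg (g m) ≤ ‖y - f (m - 1) - g'‖ ^ 2 + Lg g')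
    (hfstep : ∀ m, 1 ≤ m → ∀ f' ∈ F,
      ‖y - f m - g m‖ ^ 2 + Lf (f m) ≤ ‖y - f' - g m‖ ^ 2 + Lf f') :
    ∀ m, 1 ≤ m →
      ‖fhat - f m‖ ^ 2 ≤ -⟪fhat - f m, ghat - g m⟫
      ∧ ‖ghat - g (m + 1)‖ ^ 2 ≤ -⟪ghat - g (m + 1), fhat - f m⟫ := by
  intro m hm
  have hfm : f m ∈ F := hfF m hm
  have hgm : g m ∈ G := hgG m hm
  have hgm1 : g (m + 1) ∈ G := hgG (m + 1) (by omega)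
  constructor
  · -- first inequality
    have A1 : 2 * ⟪y - f m - g m, fhat - f m⟫ ≤ Lf fhat - Lf (f m) := by
      refine altMin_first_order F hF Lf hLf (y - f m - g m) (f m) fhat hfm hfhatF ?_
      intro f' hf'
      have h := hfstep m hm f' hf'
      have he : y - f' - g m = y - f m - g m - (f' - f m) := by abel
      rwa [he] at h
    have A2 : 2 * ⟪y - fhat - ghat, f m - fhat⟫ ≤ Lf (f m) - Lf fhat := by
      refine altMin_first_order F hF Lf hLf (y - fhat - ghat) fhat (f m) hfhatF hfm ?_
      intro f' hf'
      have h := hmin f' hf' ghat hghatG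
      have he : y - f' - ghat = y - fhat - ghat - (f' - fhat) := by abel
      rw [he] at h
      linarith
    have hneg : f m - fhat = -(fhat - f m) := by abel
    rw [hneg, inner_neg_right] at A2
    have hsum : ⟪(fhat - f m) + (ghat - g m), fhat - f m⟫ ≤ 0 := by
      have he : (fhat - f m) + (ghat - g m) = (y - f m - g m) - (y - fhat - ghat) := by abel
      rw [he, inner_sub_left]
      linarith
    rw [inner_add_left, real_inner_self_eq_norm_sq] at hsum
    rw [real_inner_comm] at hsum
    linarith
  · -- second inequality
    have B1 : 2 * ⟪y - f m - g (m + 1), ghat - g (m + 1)⟫ ≤ Lg ghat - Lg (g (m + 1)) := by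
      refine altMin_first_order G hG Lg hLg (y - f m - g (m + 1)) (g (m + 1)) ghat hgm1 hghatG ?_
      intro g' hg'
      have h := hgstep (m + 1) (by omega) g' hg'
      have hms : m + 1 - 1 = m := by omega
      rw [hms] at h
      have he : y - f m - g' = y - f m - g (m + 1) - (g' - g (m + 1)) := by abel
      rwa [he] at h
    have B2 : 2 * ⟪y - fhat - ghat, g (m + 1) - ghat⟫ ≤ Lg (g (m + 1)) - Lg ghat := by
      refine altMin_first_order G hG Lg hLg (y - fhat - ghat) ghat (g (m + 1)) hghatG hgm1 ?_
      intro g' hg'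
      have h := hmin fhat hfhatF g' hg'
      have he : y - fhat - g' = y - fhat - ghat - (g' - ghat) := by abel
      rw [he] at h
      linarith
    have hneg : g (m + 1) - ghat = -(ghat - g (m + 1)) := by abel
    rw [hneg, inner_neg_right] at B2
    have hsum : ⟪(ghat - g (m + 1)) + (fhat - f m), ghat - g (m + 1)⟫ ≤ 0 := by
      have he : (ghat - g (m + 1)) + (fhat - f m)
          = (y - f m - g (m + 1)) - (y - fhat - ghat) := by abel
      rw [he, inner_sub_left]
      linarith
    rw [inner_add_left, real_inner_self_eq_norm_sq] at hsum
    rw [real_inner_comm] at hsum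
    linarith
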